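/- Product formula for foundation ranks: Let P and Q be partially ordered sets whose strict orders are well-founded (i.e. satisfying the descending chain condition), and endow P × Q with the product (componentwise) order. Then for all a ∈ P and b ∈ Q, the foundation rank of (a,b) in P × Q equals the natural (Hessenberg) sum of the ranks: rank_{P×Q}(a,b) = rank_P(a) ♯ rank_Q(b). -/

import Mathlib

universe v

/-- Natural (Hessenberg) sum of ordinals, as `Ordinal.nadd` was defined in Mathlib (Dec 2024);
it has since been removed from Mathlib. -/
noncomputable def Ordinal.nadd : Ordinal.{v} → Ordinal.{v} → Ordinal.{v}
  | a, b =>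
    max (⨆ x : Set.Iio a, Order.succ (nadd x.1 b)) (⨆ x : Set.Iio b, Order.succ (nadd a x.1))
termination_by a b => (a, b)
decreasing_by
  · exact Prod.Lex.left _ _ x.2
  · exact Prod.Lex.right _ x.2

namespace NaturalOps

infixl:65 " ♯ " => Ordinal.nadd

end NaturalOps

open Ordinal NaturalOps

universe u

private theorem nadd_eq' (a b : Ordinal.{u}) : a ♯ b =
    max (⨆ x : Set.Iio a, Order.succ (x.1 ♯ b)) (⨆ x : Set.Iio b, Order.succ (a ♯ x.1)) := by
  rw [Ordinal.nadd]

private theorem nadd_lt_nadd_right {b c : Ordinal.{u}} (h : b < c) (a : Ordinal.{u}) :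
    b ♯ a < c ♯ a := by
  rw [nadd_eq' c a]
  exact lt_of_lt_of_le (Order.lt_succ _)
    (le_max_of_le_left (Ordinal.le_iSup (fun x : Set.Iio c => Order.succ (x.1 ♯ a)) ⟨b, h⟩))

private theorem nadd_lt_nadd_left {b c : Ordinal.{u}} (h : b < c) (a : Ordinal.{u}) :
    a ♯ b < a ♯ c := by
  rw [nadd_eq' a c]
  exact lt_of_lt_of_le (Order.lt_succ _)
    (le_max_of_le_right (Ordinal.le_iSup (fun x : Set.Iio c => Order.succ (a ♯ x.1)) ⟨b, h⟩))

private theorem nadd_le_nadd_right {b c : Ordinal.{u}} (h : b ≤ c) (a : Ordinal.{u}) :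
    b ♯ a ≤ c ♯ a := by
  rcases h.lt_or_eq with h | rfl
  · exact (nadd_lt_nadd_right h a).le
  · rfl

private theorem nadd_le_nadd_left {b c : Ordinal.{u}} (h : b ≤ c) (a : Ordinal.{u}) :
    a ♯ b ≤ a ♯ c := by
  rcases h.lt_or_eq with h | rfl
  · exact (nadd_lt_nadd_left h a).le
  · rfl

private theorem lt_nadd_iff {a b c : Ordinal.{u}} :
    a < b ♯ c ↔ (∃ b' < b, a ≤ b' ♯ c) ∨ ∃ c' < c, a ≤ b ♯ c' := by
  constructor
  · intro h
    rw [nadd_eq' b c, lt_max_iff, Ordinal.lt_iSup_iff, Ordinal.lt_iSup_iff] at h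
    rcases h with ⟨⟨x, hx⟩, h⟩ | ⟨⟨x, hx⟩, h⟩
    · exact Or.inl ⟨x, hx, Order.lt_succ_iff.1 h⟩
    · exact Or.inr ⟨x, hx, Order.lt_succ_iff.1 h⟩
  · rintro (⟨x, hx, h⟩ | ⟨x, hx, h⟩)
    · exact lt_of_le_of_lt h (nadd_lt_nadd_right hx c)
    · exact lt_of_le_of_lt h (nadd_lt_nadd_left hx b)

private theorem rank_mono_of_le {α : Type u} [PartialOrder α] [WellFoundedLT α] {x y : α}
    (h : x ≤ y) :
    IsWellFounded.rank (α := α) (· < ·) x ≤ IsWellFounded.rank (α := α) (· < ·) y := by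
  rcases h.lt_or_eq with h | rfl
  · exact (IsWellFounded.rank_lt_of_rel h).le
  · rfl

private theorem rank_prod_aux (P Q : Type u) [PartialOrder P] [PartialOrder Q]
    [WellFoundedLT P] [WellFoundedLT Q] (p : P × Q) :
    IsWellFounded.rank (α := P × Q) (· < ·) p =
      IsWellFounded.rank (α := P) (· < ·) p.1 ♯ IsWellFounded.rank (α := Q) (· < ·) p.2 := by
  induction p using (IsWellFounded.wf (α := P × Q) (r := (· < ·))).induction with
  | _ p IH =>
  obtain ⟨a, b⟩ := p
  apply le_antisymm
  · rw [IsWellFounded.rank_eq]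
    apply Ordinal.iSup_le
    rintro ⟨⟨x, y⟩, hq⟩
    rw [Order.succ_le_iff, IH _ hq]
    rcases Prod.lt_iff.1 hq with ⟨h1, h2⟩ | ⟨h1, h2⟩
    · exact lt_of_lt_of_le (nadd_lt_nadd_right (IsWellFounded.rank_lt_of_rel h1) _)
        (nadd_le_nadd_left (rank_mono_of_le h2) _)
    · exact lt_of_le_of_lt (nadd_le_nadd_right (rank_mono_of_le h1) _)
        (nadd_lt_nadd_left (IsWellFounded.rank_lt_of_rel h2) _)
  · apply le_of_forall_lt
    intro c hc
    rcases lt_nadd_iff.1 hc with ⟨o, ho, hco⟩ | ⟨o, ho, hco⟩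
    · rw [IsWellFounded.rank_eq, Ordinal.lt_iSup_iff] at ho
      obtain ⟨⟨x, hx⟩, ho⟩ := ho
      rw [Order.lt_succ_iff] at ho
      have hlt : (x, b) < (a, b) := Prod.mk_lt_mk_iff_left.2 hx
      calc c ≤ IsWellFounded.rank (α := P) (· < ·) x ♯ IsWellFounded.rank (α := Q) (· < ·) b :=
            hco.trans (nadd_le_nadd_right ho _)
        _ = IsWellFounded.rank (α := P × Q) (· < ·) (x, b) := (IH _ hlt).symm
        _ < _ := IsWellFounded.rank_lt_of_rel hlt
    · rw [IsWellFounded.rank_eq, Ordinal.lt_iSup_iff] at ho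
      obtain ⟨⟨y, hy⟩, ho⟩ := ho
      rw [Order.lt_succ_iff] at ho
      have hlt : (a, y) < (a, b) := Prod.mk_lt_mk_iff_right.2 hy
      calc c ≤ IsWellFounded.rank (α := P) (· < ·) a ♯ IsWellFounded.rank (α := Q) (· < ·) y :=
            hco.trans (nadd_le_nadd_left ho _)
        _ = IsWellFounded.rank (α := P × Q) (· < ·) (a, y) := (IH _ hlt).symm
        _ < _ := IsWellFounded.rank_lt_of_rel hlt

/-- **Product formula.** For well-founded partial orders `P` and `Q` and the componentwise
order on `P × Q`, the foundation rank of `(a, b)` is the natural (Hessenberg) sum of the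
foundation ranks of `a` and `b`. -/
theorem rank_prod_eq_nadd (P Q : Type u) [PartialOrder P] [PartialOrder Q]
    [WellFoundedLT P] [WellFoundedLT Q] (a : P) (b : Q) :
    IsWellFounded.rank (α := P × Q) (· < ·) (a, b) =
      IsWellFounded.rank (α := P) (· < ·) a ♯ IsWellFounded.rank (α := Q) (· < ·) b := by
  exact rank_prod_aux P Q (a, b)
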